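/- Let p, v, y be real numbers with p > 1, v > 1 and y > 0, and set s* = y · v^(1/(1−p)) · (1 − v^(p/(1−p)))^(−1/p), where all powers are real (rpow) powers. Define f : ℝ → ℝ by f(s) = (s^p + y^p)^(1/p) − s/v. Then for every real s ≥ 0 with s ≠ s*, one has f(s*) < f(s); that is, f attains a strict global minimum on [0,∞) at s = s*. -/

import Mathlib

open Real

private lemma young_le' {p q a c : ℝ} (hp : 1 < p)
    (hpq : 1 / p + 1 / q = 1) (ha : 0 ≤ a) (hc : 0 ≤ c) :
    a * c ≤ a ^ p / p + c ^ q / q :=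
  Real.young_inequality_of_nonneg ha hc ⟨by simpa [one_div] using hpq, by linarith, by
    have h1 : 1/p < 1 := by rw [div_lt_one (by linarith)]; exact hp
    have : 0 < 1/q := by linarith
    exact one_div_pos.mp this⟩

private lemma young_lt' {p q a c : ℝ} (hp : 1 < p) (hq : 1 < q)
    (hpq : 1 / p + 1 / q = 1) (ha : 0 ≤ a) (hc : 0 ≤ c)
    (hne : a ^ p ≠ c ^ q) : a * c < a ^ p / p + c ^ q / q := by
  have hp0 : (0:ℝ) < p := lt_trans one_pos hp
  have hq0 : (0:ℝ) < q := lt_trans one_pos hq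
  rcases eq_or_lt_of_le ha with ha0 | ha0
  · subst ha0
    have h1 : (0:ℝ) ^ p = 0 := Real.zero_rpow (ne_of_gt hp0)
    have h2 : (0:ℝ) < c ^ q := by
      rcases eq_or_lt_of_le hc with hc0 | hc0
      · exfalso; apply hne; rw [h1, ← hc0, Real.zero_rpow (ne_of_gt hq0)]
      · exact Real.rpow_pos_of_pos hc0 q
    rw [h1]
    simpa using div_pos h2 hq0
  rcases eq_or_lt_of_le hc with hc0 | hc0
  · subst hc0
    have h1 : (0:ℝ) ^ q = 0 := Real.zero_rpow (ne_of_gt hq0)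
    have h2 : (0:ℝ) < a ^ p := Real.rpow_pos_of_pos ha0 p
    rw [h1]
    simpa using div_pos h2 hp0
  have hap : (0:ℝ) < a ^ p := Real.rpow_pos_of_pos ha0 p
  have hcq : (0:ℝ) < c ^ q := Real.rpow_pos_of_pos hc0 q
  have key := strictConcaveOn_log_Ioi.2 (Set.mem_Ioi.mpr hap) (Set.mem_Ioi.mpr hcq)
    hne (by positivity : (0:ℝ) < 1/p) (by positivity : (0:ℝ) < 1/q) hpq
  simp only [smul_eq_mul] at key
  have hlog : Real.log (a * c) < Real.log (1/p * a^p + 1/q * c^q) := by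
    calc Real.log (a * c) = 1/p * Real.log (a^p) + 1/q * Real.log (c^q) := by
          rw [Real.log_rpow ha0, Real.log_rpow hc0, Real.log_mul (ne_of_gt ha0) (ne_of_gt hc0)]
          field_simp
      _ < _ := key
  have hac : (0:ℝ) < a * c := mul_pos ha0 hc0
  have h := (Real.log_lt_log_iff hac (by positivity)).mp hlog
  calc a * c < 1/p * a^p + 1/q * c^q := h
    _ = a ^ p / p + c ^ q / q := by ring

theorem stmt_3 (p v y : ℝ) (hp : 1 < p) (hv : 1 < v) (hy : 0 < y) :
    let sStar : ℝ := y * v ^ (1 / (1 - p)) * (1 - v ^ (p / (1 - p))) ^ (-1 / p)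
    let f : ℝ → ℝ := fun s => (s ^ p + y ^ p) ^ (1 / p) - s / v
    ∀ s : ℝ, 0 ≤ s → s ≠ sStar → f sStar < f s := by
  intro sStar f s hs hne
  show (sStar ^ p + y ^ p) ^ (1/p) - sStar / v < (s ^ p + y ^ p) ^ (1/p) - s / v
  have hp0 : (0:ℝ) < p := lt_trans one_pos hp
  have hp1 : (0:ℝ) < p - 1 := by linarith
  have h1p : (1:ℝ) - p ≠ 0 := by intro h; linarith [h]
  have hv0 : (0:ℝ) < v := lt_trans one_pos hv
  set q : ℝ := p / (p - 1) with hqdef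
  have hq1 : 1 < q := (one_lt_div hp1).mpr (by linarith)
  have hq0 : (0:ℝ) < q := lt_trans one_pos hq1
  have hpq : 1/p + 1/q = 1 := by rw [hqdef]; field_simp; ring
  have hqp : 1/q + 1/p = 1 := by linarith
  set K : ℝ := v ^ (p / (1 - p)) with hKdef
  have hexp_neg : p / (1 - p) < 0 := div_neg_of_pos_of_neg hp0 (by linarith)
  have hK0 : 0 < K := Real.rpow_pos_of_pos hv0 _
  have hK1 : K < 1 := Real.rpow_lt_one_of_one_lt_of_neg hv hexp_neg
  set c : ℝ := 1 - K with hcdef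
  have hc0 : 0 < c := by rw [hcdef]; linarith
  have hKc : K + c = 1 := by rw [hcdef]; ring
  -- key rpow identities
  have hKq : (v⁻¹) ^ q = K := by
    rw [Real.inv_rpow (le_of_lt hv0), hKdef, ← Real.rpow_neg (le_of_lt hv0)]
    congr 1
    rw [hqdef]; field_simp; ring
  set B : ℝ := c ^ ((p-1)/p) with hBdef
  have hB0 : 0 < B := Real.rpow_pos_of_pos hc0 _
  have hBq : B ^ q = c := by
    rw [hBdef, ← Real.rpow_mul hc0.le]
    rw [show (p-1)/p * q = 1 by rw [hqdef]; field_simp, Real.rpow_one]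
  have selfpow : ∀ t : ℝ, 0 ≤ t → (t ^ p) ^ (1/p) = t := by
    intro t ht
    rw [← Real.rpow_mul ht, mul_one_div, div_self (ne_of_gt hp0), Real.rpow_one]
  have hsdef : sStar = y * v ^ (1/(1-p)) * c ^ (-1/p) := rfl
  have hsStar0 : 0 < sStar := by
    rw [hsdef]
    have := Real.rpow_pos_of_pos hv0 (1/(1-p))
    have := Real.rpow_pos_of_pos hc0 (-1/p)
    positivity
  -- sStar ^ p = y^p * K / c
  have hsp : sStar ^ p = y ^ p * K / c := by
    rw [hsdef, Real.mul_rpow (by positivity) (Real.rpow_pos_of_pos hc0 _).le,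
        Real.mul_rpow hy.le (Real.rpow_pos_of_pos hv0 _).le,
        ← Real.rpow_mul hv0.le, ← Real.rpow_mul hc0.le,
        show 1/(1-p) * p = p/(1-p) by ring,
        show -1/p * p = -1 by field_simp, ← hKdef, Real.rpow_neg_one]
    ring
  have hNs : sStar ^ p + y ^ p = y ^ p / c := by
    rw [hsp]; field_simp; linear_combination y ^ p * hKc
  -- value at sStar
  have hfstar : (sStar ^ p + y ^ p) ^ (1/p) = sStar / v + y * B := by
    rw [hNs, Real.div_rpow (by positivity) hc0.le, selfpow y hy.le]
    have hBseq : B = c * c ^ (-1/p) := by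
      rw [hBdef, show (p-1)/p = 1 + (-1/p) by field_simp; ring,
          Real.rpow_add hc0, Real.rpow_one]
    have hsv : sStar / v = y * K * c ^ (-1/p) := by
      rw [hsdef]
      rw [show y * v ^ (1/(1-p)) * c ^ (-1/p) / v
            = y * (v ^ (1/(1-p)) / v ^ (1:ℝ)) * c ^ (-1/p) by rw [Real.rpow_one]; ring,
          ← Real.rpow_sub hv0, show 1/(1-p) - 1 = p/(1-p) by field_simp; ring, ← hKdef]
    rw [hsv, hBseq]
    have hcp : c ^ (1/p) ≠ 0 := ne_of_gt (Real.rpow_pos_of_pos hc0 _)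
    have hinv : c ^ (-1/p) = (c ^ (1/p))⁻¹ := by
      rw [show -1/p = -(1/p) by ring, Real.rpow_neg hc0.le]
    rw [hinv]
    field_simp
    linear_combination y * hKc
  -- the general lower bound at s
  set N : ℝ := (s ^ p + y ^ p) ^ (1/p) with hNdef
  have hsum0 : 0 < s ^ p + y ^ p := by
    have := Real.rpow_pos_of_pos hy p
    have := Real.rpow_nonneg hs p
    linarith
  have hN0 : 0 < N := Real.rpow_pos_of_pos hsum0 _
  have hNp : N ^ p = s ^ p + y ^ p := by
    rw [hNdef, ← Real.rpow_mul hsum0.le, one_div, inv_mul_cancel₀ (ne_of_gt hp0), Real.rpow_one]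
  have hsN : (s / N) ^ p = s ^ p / N ^ p := Real.div_rpow hs hN0.le p
  have hyN : (y / N) ^ p = y ^ p / N ^ p := Real.div_rpow hy.le hN0.le p
  -- total of RHS of the two Young inequalities is 1
  have htot : ((v⁻¹) ^ q / q + (s/N) ^ p / p) + (B ^ q / q + (y/N) ^ p / p) = 1 := by
    have hne' : s ^ p + y ^ p ≠ 0 := ne_of_gt hsum0
    have e1 : s^p/(s^p+y^p)/p + y^p/(s^p+y^p)/p = 1/p := by
      rw [← add_div, ← add_div, div_self hne']
    have e2 : K/q + c/q = 1/q := by rw [← add_div, hKc]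
    rw [hKq, hBq, hsN, hyN, hNp]
    linarith [e1, e2]
  have hinv0 : (0:ℝ) ≤ v⁻¹ := by positivity
  have hsN0 : 0 ≤ s / N := div_nonneg hs hN0.le
  have hyN0 : 0 ≤ y / N := div_nonneg hy.le hN0.le
  have hNppos : 0 < N ^ p := Real.rpow_pos_of_pos hN0 p
  have hsum : v⁻¹ * (s/N) + B * (y/N) < 1 := by
    by_cases h2 : B ^ q = (y/N) ^ p
    · by_cases h1 : (v⁻¹) ^ q = (s/N) ^ p
      · exfalso
        apply hne
        rw [hKq, hsN] at h1
        rw [hBq, hyN] at h2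
        have e1 : s ^ p = K * N ^ p := by rw [h1]; field_simp
        have e2 : y ^ p = c * N ^ p := by rw [h2]; field_simp
        have espow : s ^ p = sStar ^ p := by
          rw [hsp, e1, e2]; field_simp
        calc s = (s ^ p) ^ (1/p) := (selfpow s hs).symm
          _ = (sStar ^ p) ^ (1/p) := by rw [espow]
          _ = sStar := selfpow sStar hsStar0.le
      · have l1 := young_lt' (p:=q) (q:=p) hq1 hp hqp hinv0 hsN0 h1
        have l2 := young_le' (p:=q) (q:=p) hq1 hqp (le_of_lt hB0) hyN0
        linarith [htot]
    · have l1 := young_le' (p:=q) (q:=p) hq1 hqp hinv0 hsN0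
      have l2 := young_lt' (p:=q) (q:=p) hq1 hp hqp (le_of_lt hB0) hyN0 h2
      linarith [htot]
  have expand : v⁻¹ * (s/N) + B * (y/N) = (s/v + y*B)/N := by
    field_simp
  rw [expand] at hsum
  have hlt : s/v + y*B < N := (div_lt_one hN0).mp hsum
  have hval : (sStar ^ p + y ^ p) ^ (1/p) - sStar / v = y * B := by
    rw [hfstar]; ring
  linarith [hlt, hval]
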